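/- For nonnegative integers n and integers r, t with 0 ≤ r, t ≤ n, ∑_{s=0}^{n-r} qbinom(n-r, s) · qbinom(n-s, t) · q^{s(s+2r+2t-2n+1)/2} · (-1)^s = qbinom(r, n-t), as an identity of Laurent polynomials (or rational functions) in q. -/

import Mathlib

open Finset

/-- The Gaussian (q-)binomial coefficient as a rational function in `q = RatFunc.X`. -/
noncomputable def qbin (a b : ℕ) : RatFunc ℚ :=
  if b ≤ a then ∏ i ∈ Finset.range b,
    (1 - RatFunc.X ^ (a - i)) / (1 - RatFunc.X ^ (i + 1)) else 0


noncomputable def qfac (b : ℕ) : RatFunc ℚ :=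
  ∏ i ∈ Finset.range b, (1 - RatFunc.X ^ (i + 1))

lemma one_sub_X_pow_ne_zero (k : ℕ) : (1 - RatFunc.X ^ (k + 1) : RatFunc ℚ) ≠ 0 := by
  have hpoly : (1 - Polynomial.X ^ (k + 1) : Polynomial ℚ) ≠ 0 := by
    intro h
    have h2 := congrArg (fun p => Polynomial.coeff p (k + 1)) h
    simp [Polynomial.coeff_X_pow, Polynomial.coeff_one] at h2
  have h3 : algebraMap (Polynomial ℚ) (RatFunc ℚ) (1 - Polynomial.X ^ (k + 1)) ≠ 0 :=
    fun h => hpoly ((map_eq_zero_iff _ (IsFractionRing.injective _ _)).mp h)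
  simpa [map_sub, map_pow] using h3

lemma qfac_ne_zero (b : ℕ) : qfac b ≠ 0 :=
  Finset.prod_ne_zero_iff.mpr fun i _ => one_sub_X_pow_ne_zero i

lemma qfac_succ (b : ℕ) : qfac (b + 1) = qfac b * (1 - RatFunc.X ^ (b + 1)) :=
  Finset.prod_range_succ _ b

lemma qbin_eq {a b : ℕ} (h : b ≤ a) :
    qbin a b = qfac a / (qfac b * qfac (a - b)) := by
  rw [qbin, if_pos h, Finset.prod_div_distrib]
  have hqb : (∏ i ∈ Finset.range b, (1 - RatFunc.X ^ (i + 1) : RatFunc ℚ)) = qfac b := rfl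
  have hnum : (∏ i ∈ Finset.range b, (1 - RatFunc.X ^ (a - i) : RatFunc ℚ)) * qfac (a - b)
      = qfac a := by
    have h1 : (∏ i ∈ Finset.range b, (1 - RatFunc.X ^ (a - i) : RatFunc ℚ))
        = ∏ i ∈ Finset.range b, (1 - RatFunc.X ^ (a - b + i + 1)) := by
      rw [← Finset.prod_range_reflect (fun i => (1 - RatFunc.X ^ (a - b + i + 1) : RatFunc ℚ)) b]
      refine Finset.prod_congr rfl fun i hi => ?_
      rw [Finset.mem_range] at hi
      congr 2
      omega
    rw [h1]
    unfold qfac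
    rw [mul_comm, ← Finset.prod_range_add (fun i => (1 - RatFunc.X ^ (i + 1) : RatFunc ℚ)) (a - b) b,
      Nat.sub_add_cancel h]
  rw [hqb, ← hnum]
  have hb := qfac_ne_zero b
  have hab := qfac_ne_zero (a - b)
  field_simp

lemma qbin_zero (a : ℕ) : qbin a 0 = 1 := by
  rw [qbin, if_pos (Nat.zero_le a)]; simp

lemma qbin_self (a : ℕ) : qbin a a = 1 := by
  rw [qbin_eq le_rfl, Nat.sub_self]
  have h0 : qfac 0 = 1 := by simp [qfac]
  rw [h0, mul_one, div_self (qfac_ne_zero a)]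

lemma qbin_of_lt {a b : ℕ} (h : a < b) : qbin a b = 0 := by
  rw [qbin, if_neg (by omega)]

lemma qbin_symm {a b : ℕ} (h : b ≤ a) : qbin a b = qbin a (a - b) := by
  rw [qbin_eq h, qbin_eq (Nat.sub_le a b), Nat.sub_sub_self h, mul_comm]

lemma qbin_pascal₁ (a b : ℕ) :
    qbin (a + 1) (b + 1) = RatFunc.X ^ (b + 1) * qbin a (b + 1) + qbin a b := by
  rcases lt_trichotomy b a with h | h | h
  · obtain ⟨c, hc⟩ : ∃ c, a - b = c + 1 := ⟨a - b - 1, by omega⟩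
    rw [qbin_eq (show b + 1 ≤ a + 1 by omega), qbin_eq (show b + 1 ≤ a by omega),
      qbin_eq (show b ≤ a by omega),
      show a + 1 - (b + 1) = c + 1 from by omega,
      show a - (b + 1) = c from by omega, hc,
      qfac_succ a, qfac_succ b, qfac_succ c]
    have hx : (RatFunc.X : RatFunc ℚ) ^ (a + 1) = RatFunc.X ^ (b + 1) * RatFunc.X ^ (c + 1) := by
      rw [← pow_add]; congr 1; omega
    rw [hx]
    have h1 := one_sub_X_pow_ne_zero b
    have h2 := one_sub_X_pow_ne_zero c
    have h3 := qfac_ne_zero b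
    have h4 := qfac_ne_zero c
    field_simp
    ring
  · subst h
    rw [qbin_self, qbin_self, qbin_of_lt (by omega)]
    ring
  · rw [qbin_of_lt (by omega), qbin_of_lt (by omega), qbin_of_lt h]
    ring

lemma qbin_pascal₂ (a b : ℕ) :
    qbin (a + 1) (b + 1) = qbin a (b + 1) + RatFunc.X ^ ((a : ℤ) - (b : ℤ)) * qbin a b := by
  rcases lt_trichotomy b a with h | h | h
  · obtain ⟨c, hc⟩ : ∃ c, a - b = c + 1 := ⟨a - b - 1, by omega⟩
    have hz : (RatFunc.X : RatFunc ℚ) ^ ((a : ℤ) - (b : ℤ)) = RatFunc.X ^ (c + 1) := by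
      rw [show (a : ℤ) - (b : ℤ) = ((c + 1 : ℕ) : ℤ) from by omega, zpow_natCast]
    rw [hz, qbin_eq (show b + 1 ≤ a + 1 by omega), qbin_eq (show b + 1 ≤ a by omega),
      qbin_eq (show b ≤ a by omega),
      show a + 1 - (b + 1) = c + 1 from by omega,
      show a - (b + 1) = c from by omega, hc,
      qfac_succ a, qfac_succ b, qfac_succ c]
    have hx : (RatFunc.X : RatFunc ℚ) ^ (a + 1) = RatFunc.X ^ (b + 1) * RatFunc.X ^ (c + 1) := by
      rw [← pow_add]; congr 1; omega
    rw [hx]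
    have h1 := one_sub_X_pow_ne_zero b
    have h2 := one_sub_X_pow_ne_zero c
    have h3 := qfac_ne_zero b
    have h4 := qfac_ne_zero c
    field_simp
    ring
  · subst h
    rw [qbin_self, qbin_self, qbin_of_lt (by omega), sub_self, zpow_zero]
    ring
  · rw [qbin_of_lt (by omega), qbin_of_lt (by omega), qbin_of_lt h]
    ring

def Eexp (m t s : ℤ) : ℤ := s * (s + 2 * t - 2 * m + 1) / 2

lemma dvd_num (m t s : ℤ) : 2 ∣ s * (s + 2 * t - 2 * m + 1) := by
  obtain ⟨k, hk⟩ := Int.even_mul_succ_self s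
  exact ⟨k + s * (t - m), by linear_combination hk⟩

lemma Eexp_left (m t s : ℤ) : Eexp (m + 1) t s + s = Eexp m t s := by
  obtain ⟨x, hx⟩ := dvd_num (m + 1) t s
  obtain ⟨y, hy⟩ := dvd_num m t s
  have hxy : 2 * y = 2 * x + 2 * s := by linear_combination hx - hy
  unfold Eexp
  rw [hx, hy]
  omega

lemma Eexp_right (m t s : ℤ) : Eexp (m + 1) t (s + 1) = Eexp m t s + (t - m) := by
  obtain ⟨x, hx⟩ := dvd_num (m + 1) t (s + 1)
  obtain ⟨y, hy⟩ := dvd_num m t s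
  have hxy : 2 * x = 2 * y + 2 * (t - m) := by linear_combination hy - hx
  unfold Eexp
  rw [hx, hy]
  omega

lemma Eexp_zero (m t : ℤ) : Eexp m t 0 = 0 := by unfold Eexp; simp

noncomputable def Tf (m r t s : ℕ) : RatFunc ℚ :=
  qbin m s * qbin (m + r - s) t * (RatFunc.X : RatFunc ℚ) ^ Eexp (m : ℤ) (t : ℤ) (s : ℤ) *
    (-1 : RatFunc ℚ) ^ s

lemma Tf_rec (m r t s : ℕ) :
    Tf (m + 1) r t (s + 1) = Tf m (r + 1) t (s + 1)
      - RatFunc.X ^ ((t : ℤ) - (m : ℤ)) * Tf m r t s := by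
  unfold Tf
  rw [show m + 1 + r - (s + 1) = m + r - s from by omega,
    show m + (r + 1) - (s + 1) = m + r - s from by omega,
    qbin_pascal₁ m s]
  have hE1 : (RatFunc.X : RatFunc ℚ) ^ Eexp (m : ℤ) (t : ℤ) ((s + 1 : ℕ) : ℤ)
      = RatFunc.X ^ Eexp ((m + 1 : ℕ) : ℤ) (t : ℤ) ((s + 1 : ℕ) : ℤ) * RatFunc.X ^ (s + 1) := by
    rw [← zpow_natCast (RatFunc.X : RatFunc ℚ) (s + 1), ← zpow_add₀ RatFunc.X_ne_zero]
    congr 1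
    push_cast
    linarith [Eexp_left (m : ℤ) (t : ℤ) ((s : ℤ) + 1)]
  have hE2 : (RatFunc.X : RatFunc ℚ) ^ Eexp ((m + 1 : ℕ) : ℤ) (t : ℤ) ((s + 1 : ℕ) : ℤ)
      = RatFunc.X ^ Eexp (m : ℤ) (t : ℤ) (s : ℤ) * RatFunc.X ^ ((t : ℤ) - (m : ℤ)) := by
    rw [← zpow_add₀ RatFunc.X_ne_zero]
    congr 1
    push_cast
    linarith [Eexp_right (m : ℤ) (t : ℤ) (s : ℤ)]
  rw [hE1, hE2]
  ring

lemma Tf_zero (m r t : ℕ) : Tf (m + 1) r t 0 = Tf m (r + 1) t 0 := by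
  unfold Tf
  rw [show m + 1 + r - 0 = m + (r + 1) - 0 from by omega, qbin_zero, qbin_zero,
    show ((0 : ℕ) : ℤ) = 0 from rfl, Eexp_zero, Eexp_zero]

lemma Tf_top (m r t : ℕ) : Tf m r t (m + 1) = 0 := by
  unfold Tf
  rw [qbin_of_lt (Nat.lt_succ_self m)]
  ring

lemma key : ∀ m r t : ℕ, t ≤ m + r →
    ∑ s ∈ Finset.range (m + 1), Tf m r t s = qbin r (m + r - t) := by
  intro m
  induction m with
  | zero =>
    intro r t ht
    rw [Finset.sum_range_one]
    unfold Tf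
    rw [show ((0 : ℕ) : ℤ) = 0 from rfl, Eexp_zero, qbin_zero, zpow_zero, pow_zero,
      show 0 + r - 0 = r from by omega, show 0 + r - t = r - t from by omega]
    rw [one_mul, mul_one, mul_one]
    exact qbin_symm (by omega)
  | succ m ih =>
    intro r t ht
    by_cases htop : t = m + 1 + r
    · subst htop
      rw [Finset.sum_eq_single_of_mem 0 (Finset.mem_range.mpr (by omega))]
      · unfold Tf
        rw [show m + 1 + r - 0 = m + 1 + r from rfl, qbin_zero, qbin_self,
          show ((0 : ℕ) : ℤ) = 0 from rfl, Eexp_zero, zpow_zero, pow_zero,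
          show m + 1 + r - (m + 1 + r) = 0 from by omega, qbin_zero]
        ring
      · intro b hb hb0
        unfold Tf
        rw [qbin_of_lt (show m + 1 + r - b < m + 1 + r by omega)]
        ring
    · have ht' : t ≤ m + r := by omega
      rw [Finset.sum_range_succ']
      rw [Finset.sum_congr rfl (fun s _ => Tf_rec m r t s), Finset.sum_sub_distrib,
        ← Finset.mul_sum, Tf_zero, ih r t ht']
      have h6 : (∑ s ∈ Finset.range (m + 1), Tf m (r + 1) t (s + 1)) + Tf m (r + 1) t 0
          = qbin (r + 1) (m + (r + 1) - t) := by
        rw [← Finset.sum_range_succ' (Tf m (r + 1) t) (m + 1)]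
        rw [Finset.sum_range_succ, Tf_top, add_zero]
        exact ih (r + 1) t (by omega)
      obtain ⟨k, hk⟩ : ∃ k, m + r - t = k := ⟨_, rfl⟩
      rw [hk, show m + 1 + r - t = k + 1 from by omega]
      rw [show m + (r + 1) - t = k + 1 from by omega] at h6
      have hp := qbin_pascal₂ r k
      rw [show (t : ℤ) - (m : ℤ) = (r : ℤ) - (k : ℤ) from by omega]
      linear_combination h6 + hp

theorem stmt5 (n r t : ℕ) (hr : r ≤ n) (ht : t ≤ n) :
    ∑ s ∈ Finset.range (n - r + 1),
      qbin (n - r) s * qbin (n - s) t *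
        RatFunc.X ^ ((s : ℤ) * ((s : ℤ) + 2 * r + 2 * t - 2 * n + 1) / 2) *
        (-1 : RatFunc ℚ) ^ s
    = qbin r (n - t) := by
  have h := key (n - r) r t (by omega)
  rw [show n - r + r - t = n - t from by omega] at h
  rw [← h]
  refine Finset.sum_congr rfl fun s hs => ?_
  rw [Finset.mem_range] at hs
  unfold Tf
  rw [show n - r + r - s = n - s from by omega]
  congr 2
  unfold Eexp
  congr 1
  have hc : ((n - r : ℕ) : ℤ) = (n : ℤ) - (r : ℤ) := by omega
  rw [hc]
  ring_nf
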